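/- Let L be a local field of characteristic p with residue field l and maximal ideal 𝔭_L, and let ℘(x) = x^p − x. For every negative integer r with p ∤ r, the quotient of the images of 𝔭_L^r and 𝔭_L^{r+1} in L⁺/℘(L⁺) is isomorphic to l as an additive group; and for every negative r divisible by p, the images of 𝔭_L^r and 𝔭_L^{r+1} in L⁺/℘(L⁺) coincide. -/

import Mathlib

/-- The fractional ideal `𝔭_L^r ⊆ L = l((s))`, as an additive subgroup:
series with coefficients vanishing in degrees `< r`. -/
def pid (l : Type) [Field l] (r : ℤ) : AddSubgroup (LaurentSeries l) where
  carrier := {x | ∀ n : ℤ, n < r → x.coeff n = 0}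
  zero_mem' := by intro n hn; simp
  add_mem' := by intro a b ha hb n hn; simp [HahnSeries.coeff_add, ha n hn, hb n hn]
  neg_mem' := by intro a ha n hn; simp [HahnSeries.coeff_neg, ha n hn]

/-- The Artin–Schreier map `℘(x) = x^p - x` as an additive map on `L = l((s))`
(in characteristic `p`). -/
noncomputable def wp (p : ℕ) (l : Type) [Field l] [CharP l p] (hp : p.Prime) :
    LaurentSeries l →+ LaurentSeries l where
  toFun x := x ^ p - x
  map_zero' := by simp [zero_pow hp.ne_zero]
  map_add' := by
    intro x y
    haveI : CharP (LaurentSeries l) p :=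
      charP_of_injective_ringHom (HahnSeries.C_injective (Γ := ℤ) (R := l)) p
    haveI := Fact.mk hp
    show (x + y) ^ p - (x + y) = (x ^ p - x) + (y ^ p - y)
    rw [add_pow_char]
    ring

/-- The image `p̄^r` of `𝔭_L^r` in `L⁺/℘(L⁺)`. -/
noncomputable def pbar (p : ℕ) (l : Type) [Field l] [CharP l p] (hp : p.Prime) (r : ℤ) :
    AddSubgroup (LaurentSeries l ⧸ (wp p l hp).range) :=
  (pid l r).map (QuotientAddGroup.mk' (wp p l hp).range)

lemma lemA (p : ℕ) (hp : p.Prime) (l : Type) [Field l] [CharP l p] (r : ℤ) (hr : r < 0) (hpr : ¬ (p:ℤ) ∣ r) (y : LaurentSeries l)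
    (hy : y ^ p - y ∈ pid l r) : (y ^ p - y).coeff r = 0 := by
  have hp2 : (2:ℤ) ≤ (p:ℤ) := by exact_mod_cast hp.two_le
  have hcoeff : ∀ n : ℤ, (y ^ p - y).coeff n = (y ^ p).coeff n - y.coeff n := by
    intro n; simp [HahnSeries.coeff_sub]
  rcases eq_or_ne y 0 with rfl | hy0
  · simp [zero_pow hp.ne_zero]
  have hop : (y ^ p).order = (p : ℤ) * y.order := by
    rw [HahnSeries.order_pow]; simp [nsmul_eq_mul]
  have hyp0 : y ^ p ≠ 0 := pow_ne_zero _ hy0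
  by_cases hv : 0 ≤ y.order
  · have h1 : (y ^ p).coeff r = 0 := HahnSeries.coeff_eq_zero_of_lt_order (by rw [hop]; nlinarith)
    have h2 : y.coeff r = 0 := HahnSeries.coeff_eq_zero_of_lt_order (lt_of_lt_of_le hr hv)
    rw [hcoeff, h1, h2, sub_zero]
  · push_neg at hv
    have hpvv : (p:ℤ) * y.order < y.order := by nlinarith
    have hpvr : r ≤ (p:ℤ) * y.order := by
      by_contra hlt
      push_neg at hlt
      have h0 := hy _ hlt
      have h1 : y.coeff ((p:ℤ) * y.order) = 0 :=
        HahnSeries.coeff_eq_zero_of_lt_order hpvv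
      have h2 : (y ^ p).coeff ((p:ℤ) * y.order) ≠ 0 := by
        rw [← hop]; exact HahnSeries.coeff_order_eq_zero.not.2 hyp0
      rw [hcoeff, h1, sub_zero] at h0
      exact h2 h0
    have hne : (p:ℤ) * y.order ≠ r := fun h => hpr ⟨y.order, h.symm⟩
    have hrpv : r < (p:ℤ) * y.order := lt_of_le_of_ne hpvr (Ne.symm hne)
    have h1 : (y ^ p).coeff r = 0 := HahnSeries.coeff_eq_zero_of_lt_order (hop ▸ hrpv)
    have h2 : y.coeff r = 0 := HahnSeries.coeff_eq_zero_of_lt_order (lt_trans hrpv hpvv)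
    rw [hcoeff, h1, h2, sub_zero]

/-- Well-definedness of the leading coefficient on classes mod `℘`. -/
lemma keyW (p : ℕ) (hp : p.Prime) (l : Type) [Field l] [CharP l p] (r : ℤ) (hr : r < 0) (hpr : ¬ (p:ℤ) ∣ r) {x x' : LaurentSeries l}
    (hx : x ∈ pid l r) (hx' : x' ∈ pid l r)
    (h : QuotientAddGroup.mk' (wp p l hp).range x = QuotientAddGroup.mk' (wp p l hp).range x') :
    x.coeff r = x'.coeff r := by
  rw [QuotientAddGroup.mk'_eq_mk'] at h
  obtain ⟨z, hz, hxz⟩ := h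
  obtain ⟨y, rfl⟩ := hz
  have hz' : (wp p l hp) y ∈ pid l r := by
    have : (wp p l hp) y = x' - x := by rw [← hxz]; abel
    rw [this]
    exact sub_mem hx' hx
  have h0 : ((wp p l hp) y).coeff r = 0 := lemA p hp l r hr hpr y hz'
  have hx'eq : x' = x + (wp p l hp) y := hxz.symm
  rw [hx'eq]
  simp [HahnSeries.coeff_add, h0]

/-- The function underlying `φ`: pick a representative and take its `r`-th coefficient. -/
noncomputable def phifun (p : ℕ) (hp : p.Prime) (l : Type) [Field l] [CharP l p] (r : ℤ) : ↥(pbar p l hp r) → l :=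
  fun ξ => (AddSubgroup.mem_map.mp ξ.2).choose.coeff r

lemma phifun_spec (p : ℕ) (hp : p.Prime) (l : Type) [Field l] [CharP l p] (r : ℤ) (hr : r < 0) (hpr : ¬ (p:ℤ) ∣ r) (ξ : ↥(pbar p l hp r))
    (x : LaurentSeries l) (hx : x ∈ pid l r)
    (hmk : QuotientAddGroup.mk' (wp p l hp).range x = (ξ : LaurentSeries l ⧸ (wp p l hp).range)) :
    phifun p hp l r ξ = x.coeff r := by
  obtain ⟨hmem, heq⟩ := (AddSubgroup.mem_map.mp ξ.2).choose_spec
  exact keyW p hp l r hr hpr hmem hx (heq.trans hmk.symm)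

/-- For `r < 0` with `p ∤ r`, the quotient `p̄^r/p̄^{r+1}` of the images of
`𝔭_L^r` and `𝔭_L^{r+1}` in `L⁺/℘(L⁺)` is isomorphic to the additive group of
the residue field `l` (expressed as: there is a surjective additive map
`p̄^r → l` whose kernel is exactly `p̄^{r+1}`); and for `r < 0` with `p ∣ r`,
the two images coincide. -/
theorem stmt_18 (p : ℕ) (hp : p.Prime) (l : Type) [Field l] [Fintype l] [CharP l p] :
    ∀ r : ℤ, r < 0 →
      (¬ (p : ℤ) ∣ r →
        ∃ φ : ↥(pbar p l hp r) →+ l, Function.Surjective φ ∧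
          ∀ x : ↥(pbar p l hp r), φ x = 0 ↔ (x : LaurentSeries l ⧸ (wp p l hp).range) ∈ pbar p l hp (r + 1)) ∧
      ((p : ℤ) ∣ r → pbar p l hp r = pbar p l hp (r + 1)) := by
  intro r hr
  have hp2 : (2:ℤ) ≤ (p:ℤ) := by exact_mod_cast hp.two_le
  constructor
  · -- p ∤ r
    intro hpr
    refine ⟨{ toFun := phifun p hp l r
              map_zero' := ?_
              map_add' := ?_ }, ?_, ?_⟩
    · show phifun p hp l r 0 = 0
      rw [phifun_spec p hp l r hr hpr 0 0 (zero_mem _) (by simp)]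
      simp
    · intro ξ η
      obtain ⟨a, ha, hamk⟩ := AddSubgroup.mem_map.mp ξ.2
      obtain ⟨b, hb, hbmk⟩ := AddSubgroup.mem_map.mp η.2
      have hsum : QuotientAddGroup.mk' (wp p l hp).range (a + b) = ((ξ + η : ↥(pbar p l hp r)) : LaurentSeries l ⧸ (wp p l hp).range) := by
        rw [map_add, hamk, hbmk]; rfl
      show phifun p hp l r (ξ + η) = phifun p hp l r ξ + phifun p hp l r η
      rw [phifun_spec p hp l r hr hpr _ (a + b) (add_mem ha hb) hsum,
        phifun_spec p hp l r hr hpr ξ a ha hamk,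
        phifun_spec p hp l r hr hpr η b hb hbmk]
      simp [HahnSeries.coeff_add]
    · -- surjectivity
      intro c
      have hsing : HahnSeries.single r c ∈ pid l r := by
        intro n hn
        exact HahnSeries.coeff_single_of_ne (ne_of_lt hn)
      refine ⟨⟨QuotientAddGroup.mk' (wp p l hp).range (HahnSeries.single r c),
        AddSubgroup.mem_map.mpr ⟨_, hsing, rfl⟩⟩, ?_⟩
      show phifun p hp l r _ = c
      rw [phifun_spec p hp l r hr hpr _ (HahnSeries.single r c) hsing rfl]
      exact HahnSeries.coeff_single_same r c
    · -- kernel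
      intro ξ
      obtain ⟨a, ha, hamk⟩ := AddSubgroup.mem_map.mp ξ.2
      have hphi : phifun p hp l r ξ = a.coeff r := phifun_spec p hp l r hr hpr ξ a ha hamk
      show phifun p hp l r ξ = 0 ↔ _
      constructor
      · intro h0
        rw [hphi] at h0
        have ha' : a ∈ pid l (r + 1) := by
          intro n hn
          rcases lt_or_eq_of_le (Int.lt_add_one_iff.mp hn) with h | h
          · exact ha n h
          · rw [h]; exact h0
        exact AddSubgroup.mem_map.mpr ⟨a, ha', hamk⟩
      · intro hmem
        obtain ⟨b, hb, hbmk⟩ := AddSubgroup.mem_map.mp hmem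
        have hb' : b ∈ pid l r := fun n hn => hb n (lt_trans hn (by omega))
        have : a.coeff r = b.coeff r :=
          keyW p hp l r hr hpr ha hb' (hamk.trans hbmk.symm)
        rw [hphi, this]
        exact hb r (by omega)
  · -- p ∣ r
    intro hdvd
    refine le_antisymm ?_ (AddSubgroup.map_mono (fun x hx n hn => hx n (lt_trans hn (by omega))))
    intro ξ hξ
    obtain ⟨x, hx, rfl⟩ := AddSubgroup.mem_map.mp hξ
    obtain ⟨m, hm⟩ := hdvd
    have hm0 : m < 0 := by nlinarith
    have hrm : r < m := by nlinarith
    haveI : ExpChar l p := ExpChar.prime hp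
    obtain ⟨a, ha⟩ := surjective_frobenius l p (x.coeff r)
    rw [frobenius_def] at ha
    set y : LaurentSeries l := HahnSeries.single m a with hy
    have hyp : y ^ p = HahnSeries.single r (a ^ p) := by
      rw [hy, HahnSeries.single_pow]
      congr 1
      rw [nsmul_eq_mul, hm]
    set x' : LaurentSeries l := x - (wp p l hp) y with hx'
    have hx'mem : x' ∈ pid l (r + 1) := by
      intro n hn
      have hwp : (wp p l hp) y = HahnSeries.single r (a ^ p) - HahnSeries.single m a := by
        show y ^ p - y = _
        rw [hyp, hy]
      have hcoe : x'.coeff n = x.coeff n - ((HahnSeries.single r (a ^ p)).coeff n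
          - (HahnSeries.single m a).coeff n) := by
        rw [hx', hwp]
        simp [HahnSeries.coeff_sub]
      rcases lt_or_eq_of_le (Int.lt_add_one_iff.mp hn) with h | h
      · rw [hcoe, hx n h, HahnSeries.coeff_single_of_ne (ne_of_lt h),
          HahnSeries.coeff_single_of_ne (ne_of_lt (lt_trans h hrm))]
        ring
      · rw [hcoe, h, HahnSeries.coeff_single_same,
          HahnSeries.coeff_single_of_ne (ne_of_lt hrm), ha]
        ring
    refine AddSubgroup.mem_map.mpr ⟨x', hx'mem, ?_⟩
    rw [QuotientAddGroup.mk'_eq_mk']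
    exact ⟨(wp p l hp) y, ⟨y, rfl⟩, by rw [hx']; abel⟩
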